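/- The operator V = (Mᴴ ⊗ Mᴴ)·Λ·(P(α) ⊗ P(β))·(M ⊗ M), where M is any unitary 2×2 matrix, Λ = diag(1,1,1,e^{iφ}), and P(θ) = diag(1,e^{iθ}), satisfies all directed consistency conditions: (D2) V·(S·V·S) = (S·V·S)·V; and on three qubits, with V' = S·V·S, (D3a) (V⊗I)·(I⊗V) = (I⊗V)·(V⊗I), (D3b) (V⊗I)·(I⊗V') = (I⊗V')·(V⊗I), and (D3c) (V'⊗I)·(I⊗V) = (I⊗V)·(V'⊗I). Hence V is a unitary edge operator for directed graphs. -/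

import Mathlib

open Matrix Kronecker

/-- The swap operator on two qubits. -/
def swapOp : Matrix (Fin 2 × Fin 2) (Fin 2 × Fin 2) ℂ :=
  fun p q => if p.1 = q.2 ∧ p.2 = q.1 then 1 else 0

/-- The single-qubit phase gate `P(θ) = diag(1, e^{iθ})`. -/
noncomputable def phaseGate (θ : ℝ) : Matrix (Fin 2) (Fin 2) ℂ :=
  !![1, 0; 0, Complex.exp (θ * Complex.I)]

/-- The controlled phase `Λ = diag(1,1,1,e^{iφ})`. -/
noncomputable def cPhase (φ : ℝ) : Matrix (Fin 2 × Fin 2) (Fin 2 × Fin 2) ℂ :=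
  Matrix.diagonal (fun p => if p = (1, 1) then Complex.exp (φ * Complex.I) else 1)

/-- The directed edge operator `V = (Mᴴ⊗Mᴴ) Λ (P(α)⊗P(β)) (M⊗M)`. -/
noncomputable def Vdir (M : Matrix (Fin 2) (Fin 2) ℂ) (α β φ : ℝ) :
    Matrix (Fin 2 × Fin 2) (Fin 2 × Fin 2) ℂ :=
  (Mᴴ ⊗ₖ Mᴴ) * cPhase φ * (phaseGate α ⊗ₖ phaseGate β) * (M ⊗ₖ M)

/-- `W ⊗ I` acting on qubits 1,2 of three qubits (reindexed to match `I ⊗ W`). -/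
def opOn12 (W : Matrix (Fin 2 × Fin 2) (Fin 2 × Fin 2) ℂ) :
    Matrix (Fin 2 × Fin 2 × Fin 2) (Fin 2 × Fin 2 × Fin 2) ℂ :=
  Matrix.reindex (Equiv.prodAssoc (Fin 2) (Fin 2) (Fin 2))
    (Equiv.prodAssoc (Fin 2) (Fin 2) (Fin 2)) (W ⊗ₖ (1 : Matrix (Fin 2) (Fin 2) ℂ))

/-- `I ⊗ W` acting on qubits 2,3 of three qubits. -/
def opOn23 (W : Matrix (Fin 2 × Fin 2) (Fin 2 × Fin 2) ℂ) :
    Matrix (Fin 2 × Fin 2 × Fin 2) (Fin 2 × Fin 2 × Fin 2) ℂ :=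
  (1 : Matrix (Fin 2) (Fin 2) ℂ) ⊗ₖ W

/-! ### Auxiliary material -/

noncomputable def dvec (α β φ : ℝ) : Fin 2 × Fin 2 → ℂ := fun p =>
  (if p = (1, 1) then Complex.exp (φ * Complex.I) else 1) *
    ((if p.1 = 1 then Complex.exp (α * Complex.I) else 1) *
      (if p.2 = 1 then Complex.exp (β * Complex.I) else 1))

lemma phaseGate_diag (θ : ℝ) :
    phaseGate θ = Matrix.diagonal (fun i : Fin 2 =>
      if i = 1 then Complex.exp (θ * Complex.I) else 1) := by
  ext i j
  fin_cases i <;> fin_cases j <;>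
    simp [phaseGate, Matrix.diagonal]

lemma Vdir_eq (M : Matrix (Fin 2) (Fin 2) ℂ) (α β φ : ℝ) :
    Vdir M α β φ = (Mᴴ ⊗ₖ Mᴴ) * Matrix.diagonal (dvec α β φ) * (M ⊗ₖ M) := by
  unfold Vdir
  rw [phaseGate_diag, phaseGate_diag, Matrix.diagonal_kronecker_diagonal,
    mul_assoc (Mᴴ ⊗ₖ Mᴴ), cPhase, Matrix.diagonal_mul_diagonal]
  rfl

lemma swapOp_mul (A : Matrix (Fin 2 × Fin 2) (Fin 2 × Fin 2) ℂ) :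
    swapOp * A = A.submatrix Prod.swap id := by
  ext p q
  rw [Matrix.mul_apply, Finset.sum_eq_single (Prod.swap p)]
  · simp [swapOp, Prod.swap]
  · intro r _ hr
    have : ¬(p.1 = r.2 ∧ p.2 = r.1) := by
      rintro ⟨h1, h2⟩
      exact hr (by cases p; cases r; simp_all [Prod.swap])
    simp [swapOp, this]
  · simp

lemma mul_swapOp (A : Matrix (Fin 2 × Fin 2) (Fin 2 × Fin 2) ℂ) :
    A * swapOp = A.submatrix id Prod.swap := by
  ext p q
  rw [Matrix.mul_apply, Finset.sum_eq_single (Prod.swap q)]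
  · simp [swapOp, Prod.swap]
  · intro r _ hr
    have : ¬(r.1 = q.2 ∧ r.2 = q.1) := by
      rintro ⟨h1, h2⟩
      exact hr (by cases q; cases r; simp_all [Prod.swap])
    simp [swapOp, this]
  · simp

lemma swap_conj (A : Matrix (Fin 2 × Fin 2) (Fin 2 × Fin 2) ℂ) :
    swapOp * A * swapOp = A.submatrix Prod.swap Prod.swap := by
  rw [swapOp_mul, mul_swapOp, Matrix.submatrix_submatrix]
  rfl

lemma swap_conj_mul (A B : Matrix (Fin 2 × Fin 2) (Fin 2 × Fin 2) ℂ) :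
    swapOp * (A * B) * swapOp = (swapOp * A * swapOp) * (swapOp * B * swapOp) := by
  rw [swap_conj, swap_conj, swap_conj]
  rw [show (Prod.swap : Fin 2 × Fin 2 → Fin 2 × Fin 2) = ⇑(Equiv.prodComm (Fin 2) (Fin 2)) from rfl,
    Matrix.submatrix_mul_equiv]

lemma swap_conj_kron (A B : Matrix (Fin 2) (Fin 2) ℂ) :
    swapOp * (A ⊗ₖ B) * swapOp = B ⊗ₖ A := by
  rw [swap_conj]
  ext p q
  simp [Matrix.kroneckerMap_apply, mul_comm]

lemma swap_conj_diag (d : Fin 2 × Fin 2 → ℂ) :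
    swapOp * Matrix.diagonal d * swapOp = Matrix.diagonal (d ∘ Prod.swap) := by
  rw [swap_conj]
  ext p q
  by_cases h : p = q
  · subst h; simp [Matrix.diagonal_apply]
  · have h' : Prod.swap p ≠ Prod.swap q := fun hc => h (Prod.swap_injective hc)
    simp [Matrix.diagonal_apply, h, h']

lemma dvec_swap (α β φ : ℝ) : (dvec α β φ) ∘ Prod.swap = dvec β α φ := by
  funext p
  obtain ⟨i, j⟩ := p
  by_cases hi : i = 1 <;> by_cases hj : j = 1 <;>
    simp [dvec, hi, hj, Prod.ext_iff] <;> ring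

lemma swap_Vdir (M : Matrix (Fin 2) (Fin 2) ℂ) (α β φ : ℝ) :
    swapOp * Vdir M α β φ * swapOp =
      (Mᴴ ⊗ₖ Mᴴ) * Matrix.diagonal (dvec β α φ) * (M ⊗ₖ M) := by
  rw [Vdir_eq, swap_conj_mul, swap_conj_mul, swap_conj_kron, swap_conj_kron,
    swap_conj_diag, dvec_swap]

/-- generic: diagonal commutes with a matrix supported where the diagonal is constant. -/
lemma diag_comm {n : Type*} [Fintype n] [DecidableEq n] (d : n → ℂ)
    (X : Matrix n n ℂ) (h : ∀ p q, X p q ≠ 0 → d p = d q) :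
    Matrix.diagonal d * X = X * Matrix.diagonal d := by
  ext p q
  rw [Matrix.diagonal_mul, Matrix.mul_diagonal]
  by_cases hX : X p q = 0
  · simp [hX]
  · rw [h p q hX, mul_comm]

lemma sandwich {n : Type*} [Fintype n] [DecidableEq n]
    (B B' X X' Δ : Matrix n n ℂ) (h1 : X * Δ = Δ * X) (h2 : X * X' = 1) :
    (B * X) * Δ * (X' * B') = B * Δ * B' := by
  calc (B * X) * Δ * (X' * B') = B * (X * Δ) * (X' * B') := by rw [mul_assoc B X Δ]
    _ = B * Δ * (X * X') * B' := by rw [h1]; noncomm_ring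
    _ = B * Δ * B' := by rw [h2, mul_one]

lemma conjComm {n : Type*} [Fintype n] [DecidableEq n]
    (T T' Δe Δf : Matrix n n ℂ) (h : T' * T = 1) (hc : Δe * Δf = Δf * Δe) :
    (T * Δe * T') * (T * Δf * T') = (T * Δf * T') * (T * Δe * T') := by
  have key : ∀ Δ Δ' : Matrix n n ℂ,
      (T * Δ * T') * (T * Δ' * T') = T * (Δ * Δ') * T' := by
    intro Δ Δ'
    calc (T * Δ * T') * (T * Δ' * T') = T * Δ * (T' * T) * Δ' * T' := by noncomm_ring
      _ = T * (Δ * Δ') * T' := by rw [h]; noncomm_ring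
  rw [key, key, hc]

lemma diag_mul_comm {n : Type*} [Fintype n] [DecidableEq n] (d d' : n → ℂ) :
    Matrix.diagonal d * Matrix.diagonal d' = Matrix.diagonal d' * Matrix.diagonal d := by
  rw [Matrix.diagonal_mul_diagonal, Matrix.diagonal_mul_diagonal]
  exact congrArg _ (funext fun i => mul_comm _ _)

/-! ### opOn12 / opOn23 structure -/

lemma opOn12_mul (X Y : Matrix (Fin 2 × Fin 2) (Fin 2 × Fin 2) ℂ) :
    opOn12 (X * Y) = opOn12 X * opOn12 Y := by
  unfold opOn12
  rw [Matrix.reindex_apply, Matrix.reindex_apply, Matrix.reindex_apply,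
    Matrix.submatrix_mul_equiv, ← Matrix.mul_kronecker_mul, one_mul]

lemma opOn23_mul (X Y : Matrix (Fin 2 × Fin 2) (Fin 2 × Fin 2) ℂ) :
    opOn23 (X * Y) = opOn23 X * opOn23 Y := by
  unfold opOn23
  rw [← Matrix.mul_kronecker_mul, one_mul]

lemma opOn12_kron (A B : Matrix (Fin 2) (Fin 2) ℂ) :
    opOn12 (A ⊗ₖ B) = A ⊗ₖ (B ⊗ₖ (1 : Matrix (Fin 2) (Fin 2) ℂ)) := by
  unfold opOn12
  exact Matrix.kronecker_assoc A B 1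

lemma opOn12_diag (e : Fin 2 × Fin 2 → ℂ) :
    opOn12 (Matrix.diagonal e) =
      Matrix.diagonal (fun p : Fin 2 × Fin 2 × Fin 2 => e (p.1, p.2.1)) := by
  unfold opOn12
  rw [show (1 : Matrix (Fin 2) (Fin 2) ℂ) = Matrix.diagonal (fun _ => 1) from
    (Matrix.diagonal_one).symm, Matrix.diagonal_kronecker_diagonal]
  ext p q
  by_cases h : p = q
  · subst h; simp [Matrix.diagonal_apply]
  · have h' : (Equiv.prodAssoc (Fin 2) (Fin 2) (Fin 2)).symm p ≠
        (Equiv.prodAssoc (Fin 2) (Fin 2) (Fin 2)).symm q := fun hc => h (by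
      simpa using congrArg (Equiv.prodAssoc (Fin 2) (Fin 2) (Fin 2)) hc)
    rw [Matrix.reindex_apply, Matrix.submatrix_apply, Matrix.diagonal_apply_ne _ h',
      Matrix.diagonal_apply_ne _ h]

lemma opOn23_diag (f : Fin 2 × Fin 2 → ℂ) :
    opOn23 (Matrix.diagonal f) =
      Matrix.diagonal (fun p : Fin 2 × Fin 2 × Fin 2 => f p.2) := by
  unfold opOn23
  rw [show (1 : Matrix (Fin 2) (Fin 2) ℂ) = Matrix.diagonal (fun _ => 1) from
    (Matrix.diagonal_one).symm, Matrix.diagonal_kronecker_diagonal]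
  simp

lemma K3_mul (A B C A' B' C' : Matrix (Fin 2) (Fin 2) ℂ) :
    (A ⊗ₖ (B ⊗ₖ C)) * (A' ⊗ₖ (B' ⊗ₖ C')) = (A * A') ⊗ₖ ((B * B') ⊗ₖ (C * C')) := by
  rw [Matrix.mul_kronecker_mul, Matrix.mul_kronecker_mul]

/-- `opOn12` of a conjugated diagonal, in symmetric form. -/
lemma opOn12_V (M : Matrix (Fin 2) (Fin 2) ℂ) (hM : M * Mᴴ = 1)
    (e : Fin 2 × Fin 2 → ℂ) :
    opOn12 ((Mᴴ ⊗ₖ Mᴴ) * Matrix.diagonal e * (M ⊗ₖ M)) =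
      (Mᴴ ⊗ₖ (Mᴴ ⊗ₖ Mᴴ)) *
        Matrix.diagonal (fun p : Fin 2 × Fin 2 × Fin 2 => e (p.1, p.2.1)) *
        (M ⊗ₖ (M ⊗ₖ M)) := by
  have hM' : Mᴴ * M = 1 := mul_eq_one_comm.mp hM
  rw [opOn12_mul, opOn12_mul, opOn12_kron, opOn12_kron, opOn12_diag]
  have hB : (Mᴴ ⊗ₖ (Mᴴ ⊗ₖ (1 : Matrix (Fin 2) (Fin 2) ℂ))) =
      (Mᴴ ⊗ₖ (Mᴴ ⊗ₖ Mᴴ)) * ((1 : Matrix (Fin 2) (Fin 2) ℂ) ⊗ₖ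
        ((1 : Matrix (Fin 2) (Fin 2) ℂ) ⊗ₖ M)) := by
    rw [K3_mul, hM']; simp
  have hB' : (M ⊗ₖ (M ⊗ₖ (1 : Matrix (Fin 2) (Fin 2) ℂ))) =
      ((1 : Matrix (Fin 2) (Fin 2) ℂ) ⊗ₖ ((1 : Matrix (Fin 2) (Fin 2) ℂ) ⊗ₖ Mᴴ)) *
        (M ⊗ₖ (M ⊗ₖ M)) := by
    rw [K3_mul, hM']; simp
  have hcomm : ((1 : Matrix (Fin 2) (Fin 2) ℂ) ⊗ₖ ((1 : Matrix (Fin 2) (Fin 2) ℂ) ⊗ₖ M)) *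
      Matrix.diagonal (fun p : Fin 2 × Fin 2 × Fin 2 => e (p.1, p.2.1)) =
      Matrix.diagonal (fun p : Fin 2 × Fin 2 × Fin 2 => e (p.1, p.2.1)) *
        ((1 : Matrix (Fin 2) (Fin 2) ℂ) ⊗ₖ ((1 : Matrix (Fin 2) (Fin 2) ℂ) ⊗ₖ M)) := by
    refine (diag_comm _ _ ?_).symm
    intro p q h
    have h1 : p.1 = q.1 := by
      by_contra hc
      exact h (by rw [Matrix.kroneckerMap_apply, Matrix.one_apply_ne hc, zero_mul])
    have h2 : p.2.1 = q.2.1 := by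
      by_contra hc
      exact h (by rw [Matrix.kroneckerMap_apply, Matrix.kroneckerMap_apply,
        Matrix.one_apply_ne hc, zero_mul, mul_zero])
    rw [h1, h2]
  have hXX : ((1 : Matrix (Fin 2) (Fin 2) ℂ) ⊗ₖ ((1 : Matrix (Fin 2) (Fin 2) ℂ) ⊗ₖ M)) *
      ((1 : Matrix (Fin 2) (Fin 2) ℂ) ⊗ₖ ((1 : Matrix (Fin 2) (Fin 2) ℂ) ⊗ₖ Mᴴ)) = 1 := by
    rw [K3_mul, hM]; simp
  rw [hB, hB']
  exact sandwich _ _ _ _ _ hcomm hXX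

lemma opOn23_V (M : Matrix (Fin 2) (Fin 2) ℂ) (hM : M * Mᴴ = 1)
    (f : Fin 2 × Fin 2 → ℂ) :
    opOn23 ((Mᴴ ⊗ₖ Mᴴ) * Matrix.diagonal f * (M ⊗ₖ M)) =
      (Mᴴ ⊗ₖ (Mᴴ ⊗ₖ Mᴴ)) *
        Matrix.diagonal (fun p : Fin 2 × Fin 2 × Fin 2 => f p.2) *
        (M ⊗ₖ (M ⊗ₖ M)) := by
  have hM' : Mᴴ * M = 1 := mul_eq_one_comm.mp hM
  rw [opOn23_mul, opOn23_mul, opOn23_diag]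
  unfold opOn23
  have hB : ((1 : Matrix (Fin 2) (Fin 2) ℂ) ⊗ₖ (Mᴴ ⊗ₖ Mᴴ)) =
      (Mᴴ ⊗ₖ (Mᴴ ⊗ₖ Mᴴ)) * (M ⊗ₖ ((1 : Matrix (Fin 2) (Fin 2) ℂ) ⊗ₖ
        (1 : Matrix (Fin 2) (Fin 2) ℂ))) := by
    rw [K3_mul, hM']; simp
  have hB' : ((1 : Matrix (Fin 2) (Fin 2) ℂ) ⊗ₖ (M ⊗ₖ M)) =
      (Mᴴ ⊗ₖ ((1 : Matrix (Fin 2) (Fin 2) ℂ) ⊗ₖ (1 : Matrix (Fin 2) (Fin 2) ℂ))) *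
        (M ⊗ₖ (M ⊗ₖ M)) := by
    rw [K3_mul, hM']; simp
  have hcomm : (M ⊗ₖ ((1 : Matrix (Fin 2) (Fin 2) ℂ) ⊗ₖ (1 : Matrix (Fin 2) (Fin 2) ℂ))) *
      Matrix.diagonal (fun p : Fin 2 × Fin 2 × Fin 2 => f p.2) =
      Matrix.diagonal (fun p : Fin 2 × Fin 2 × Fin 2 => f p.2) *
        (M ⊗ₖ ((1 : Matrix (Fin 2) (Fin 2) ℂ) ⊗ₖ (1 : Matrix (Fin 2) (Fin 2) ℂ))) := by
    refine (diag_comm _ _ ?_).symm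
    intro p q h
    have h1 : p.2.1 = q.2.1 := by
      by_contra hc
      exact h (by rw [Matrix.kroneckerMap_apply, Matrix.kroneckerMap_apply,
        Matrix.one_apply_ne hc, zero_mul, mul_zero])
    have h2 : p.2.2 = q.2.2 := by
      by_contra hc
      exact h (by rw [Matrix.kroneckerMap_apply, Matrix.kroneckerMap_apply,
        Matrix.one_apply_ne hc, mul_zero, mul_zero])
    rw [Prod.ext h1 h2]
  have hXX : (M ⊗ₖ ((1 : Matrix (Fin 2) (Fin 2) ℂ) ⊗ₖ (1 : Matrix (Fin 2) (Fin 2) ℂ))) *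
      (Mᴴ ⊗ₖ ((1 : Matrix (Fin 2) (Fin 2) ℂ) ⊗ₖ (1 : Matrix (Fin 2) (Fin 2) ℂ))) = 1 := by
    rw [K3_mul, hM]; simp
  rw [hB, hB']
  exact sandwich _ _ _ _ _ hcomm hXX

lemma master (M : Matrix (Fin 2) (Fin 2) ℂ) (hM : M * Mᴴ = 1)
    (e f : Fin 2 × Fin 2 → ℂ) :
    opOn12 ((Mᴴ ⊗ₖ Mᴴ) * Matrix.diagonal e * (M ⊗ₖ M)) *
        opOn23 ((Mᴴ ⊗ₖ Mᴴ) * Matrix.diagonal f * (M ⊗ₖ M)) =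
      opOn23 ((Mᴴ ⊗ₖ Mᴴ) * Matrix.diagonal f * (M ⊗ₖ M)) *
        opOn12 ((Mᴴ ⊗ₖ Mᴴ) * Matrix.diagonal e * (M ⊗ₖ M)) := by
  have hM' : Mᴴ * M = 1 := mul_eq_one_comm.mp hM
  rw [opOn12_V M hM e, opOn23_V M hM f]
  have hTT : (M ⊗ₖ (M ⊗ₖ M)) * (Mᴴ ⊗ₖ (Mᴴ ⊗ₖ Mᴴ)) = 1 := by
    rw [K3_mul, hM, Matrix.one_kronecker_one, Matrix.one_kronecker_one]
  exact conjComm _ _ _ _ hTT (diag_mul_comm _ _)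

/-- For `M` unitary, the operator `V = (Mᴴ⊗Mᴴ) Λ (P(α)⊗P(β)) (M⊗M)` satisfies all
directed consistency conditions D2, D3a, D3b, D3c. -/
theorem Vdir_satisfies_directed_conditions (M : Matrix (Fin 2) (Fin 2) ℂ)
    (hM : M * Mᴴ = 1) (α β φ : ℝ) :
    Vdir M α β φ * (swapOp * Vdir M α β φ * swapOp) =
        (swapOp * Vdir M α β φ * swapOp) * Vdir M α β φ ∧
      opOn12 (Vdir M α β φ) * opOn23 (Vdir M α β φ) =
        opOn23 (Vdir M α β φ) * opOn12 (Vdir M α β φ) ∧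
      opOn12 (Vdir M α β φ) * opOn23 (swapOp * Vdir M α β φ * swapOp) =
        opOn23 (swapOp * Vdir M α β φ * swapOp) * opOn12 (Vdir M α β φ) ∧
      opOn12 (swapOp * Vdir M α β φ * swapOp) * opOn23 (Vdir M α β φ) =
        opOn23 (Vdir M α β φ) * opOn12 (swapOp * Vdir M α β φ * swapOp) := by
  have hBA : (M ⊗ₖ M) * (Mᴴ ⊗ₖ Mᴴ) = 1 := by
    rw [← Matrix.mul_kronecker_mul, hM, Matrix.one_kronecker_one]
  refine ⟨?_, ?_, ?_, ?_⟩
  · rw [swap_Vdir, Vdir_eq]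
    exact conjComm _ _ _ _ hBA (diag_mul_comm _ _)
  · rw [Vdir_eq]
    exact master M hM _ _
  · rw [swap_Vdir, Vdir_eq]
    exact master M hM _ _
  · rw [swap_Vdir, Vdir_eq]
    exact master M hM _ _
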